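/- (Instantaneous safety bound.) Let V be a positive definite d×d real matrix, r ≥ 0, α ∈ ℝ, and let â, a, ã, x ∈ ℝ^d satisfy ‖a − â‖_V ≤ r, ‖ã − â‖_V ≤ r, and ⟨ã, x⟩ ≤ α. Then ⟨a, x⟩ − α ≤ 2 r ‖x‖_{V^{-1}}. -/

import Mathlib

open Matrix

/-- `‖z‖_W := √(zᵀ W z)` for a `d × d` real matrix `W`. -/
noncomputable def matNorm {d : ℕ} (W : Matrix (Fin d) (Fin d) ℝ) (z : Fin d → ℝ) : ℝ :=
  Real.sqrt (z ⬝ᵥ (W *ᵥ z))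

lemma dself {d : ℕ} (u : Fin d → ℝ) : 0 ≤ u ⬝ᵥ u :=
  Finset.sum_nonneg fun _ _ => mul_self_nonneg _

lemma dot_cs {d : ℕ} (u w : Fin d → ℝ) :
    u ⬝ᵥ w ≤ Real.sqrt (u ⬝ᵥ u) * Real.sqrt (w ⬝ᵥ w) := by
  have h := Finset.sum_mul_sq_le_sq_mul_sq Finset.univ u w
  calc u ⬝ᵥ w ≤ |∑ i, u i * w i| := le_abs_self _
    _ = Real.sqrt ((∑ i, u i * w i)^2) := (Real.sqrt_sq_eq_abs _).symm
    _ ≤ Real.sqrt ((∑ i, u i ^ 2) * (∑ i, w i ^ 2)) := Real.sqrt_le_sqrt h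
    _ = Real.sqrt (u ⬝ᵥ u) * Real.sqrt (w ⬝ᵥ w) := by
        rw [Real.sqrt_mul (by positivity)]
        simp [dotProduct, sq]

lemma norm_triangle {d : ℕ} (u w : Fin d → ℝ) :
    Real.sqrt ((u + w) ⬝ᵥ (u + w)) ≤ Real.sqrt (u ⬝ᵥ u) + Real.sqrt (w ⬝ᵥ w) := by
  have hcs := dot_cs u w
  have h1 : (u + w) ⬝ᵥ (u + w) ≤ (Real.sqrt (u ⬝ᵥ u) + Real.sqrt (w ⬝ᵥ w))^2 := by
    have e : (u + w) ⬝ᵥ (u + w) = u ⬝ᵥ u + 2 * (u ⬝ᵥ w) + w ⬝ᵥ w := by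
      simp [add_dotProduct, dotProduct_add, dotProduct_comm w u]; ring
    have hu : u ⬝ᵥ u = Real.sqrt (u ⬝ᵥ u) ^ 2 := (Real.sq_sqrt (dself u)).symm
    have hw : w ⬝ᵥ w = Real.sqrt (w ⬝ᵥ w) ^ 2 := (Real.sq_sqrt (dself w)).symm
    nlinarith [hcs]
  calc Real.sqrt ((u + w) ⬝ᵥ (u + w)) ≤ Real.sqrt ((Real.sqrt (u ⬝ᵥ u) + Real.sqrt (w ⬝ᵥ w))^2) :=
        Real.sqrt_le_sqrt h1
    _ = _ := Real.sqrt_sq (by positivity)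

lemma key {d : ℕ} (S : Matrix (Fin d) (Fin d) ℝ) (hsym : Sᵀ = S) (z w : Fin d → ℝ) :
    (S *ᵥ z) ⬝ᵥ w = z ⬝ᵥ (S *ᵥ w) := by
  rw [dotProduct_mulVec, ← mulVec_transpose, hsym, dotProduct_comm]

/-- instantaneous safety bound: if `‖a − â‖_V ≤ r`, `‖ã − â‖_V ≤ r`
and `⟨ã, x⟩ ≤ α`, then `⟨a, x⟩ − α ≤ 2 r ‖x‖_{V⁻¹}`. -/
theorem instantaneous_safety_bound (d : ℕ)
    (V : Matrix (Fin d) (Fin d) ℝ) (hV : V.PosDef) (r : ℝ) (hr : 0 ≤ r) (α : ℝ)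
    (ahat a atilde x : Fin d → ℝ)
    (h1 : matNorm V (a - ahat) ≤ r)
    (h2 : matNorm V (atilde - ahat) ≤ r)
    (h3 : atilde ⬝ᵥ x ≤ α) :
    a ⬝ᵥ x - α ≤ 2 * r * matNorm V⁻¹ x := by
  set S := (open scoped MatrixOrder in CFC.sqrt V) with hSdef
  have hSS : S * S = V := by
    open scoped MatrixOrder in exact CFC.sqrt_mul_sqrt_self V (Matrix.nonneg_iff_posSemidef.mpr hV.posSemidef)
  have hsym : Sᵀ = S := by
    have : S.IsHermitian := by
      open scoped MatrixOrder in exact (Matrix.nonneg_iff_posSemidef.mp (CFC.sqrt_nonneg V)).1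
    simpa [Matrix.IsHermitian, Matrix.conjTranspose_eq_transpose_of_trivial] using this
  have hVunit : IsUnit V := (Matrix.isUnit_iff_isUnit_det V).mpr (isUnit_iff_ne_zero.mpr hV.det_pos.ne')
  have hSunit : IsUnit S := by
    have h : IsUnit (S * S) := hSS ▸ hVunit
    rw [Matrix.isUnit_iff_isUnit_det] at h ⊢
    rw [Matrix.det_mul] at h
    exact isUnit_of_mul_isUnit_left h
  have hSdet : IsUnit S.det := (Matrix.isUnit_iff_isUnit_det S).mp hSunit
  have hSinv : S * S⁻¹ = 1 := Matrix.mul_nonsing_inv S hSdet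
  have hsyminv : (S⁻¹)ᵀ = S⁻¹ := by rw [Matrix.transpose_nonsing_inv, hsym]
  -- norms as Euclidean norms
  have hnormV : ∀ z : Fin d → ℝ, matNorm V z = Real.sqrt ((S *ᵥ z) ⬝ᵥ (S *ᵥ z)) := by
    intro z
    rw [matNorm, ← hSS, ← Matrix.mulVec_mulVec, ← key S hsym]
  have hVinv : V⁻¹ = S⁻¹ * S⁻¹ := by rw [← hSS, Matrix.mul_inv_rev]
  have hnormVinv : matNorm V⁻¹ x = Real.sqrt ((S⁻¹ *ᵥ x) ⬝ᵥ (S⁻¹ *ᵥ x)) := by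
    rw [matNorm, hVinv, ← Matrix.mulVec_mulVec]
    congr 1
    rw [key S⁻¹ hsyminv]
  -- step 1: a ⬝ᵥ x - α ≤ (a - atilde) ⬝ᵥ x
  have step1 : a ⬝ᵥ x - α ≤ (a - atilde) ⬝ᵥ x := by
    rw [sub_dotProduct]; linarith
  -- step 2: (a - atilde) ⬝ᵥ x = (S *ᵥ (a - atilde)) ⬝ᵥ (S⁻¹ *ᵥ x)
  have step2 : (a - atilde) ⬝ᵥ x = (S *ᵥ (a - atilde)) ⬝ᵥ (S⁻¹ *ᵥ x) := by
    rw [key S hsym, Matrix.mulVec_mulVec, hSinv, Matrix.one_mulVec]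
  -- step 3: CS
  have step3 : (S *ᵥ (a - atilde)) ⬝ᵥ (S⁻¹ *ᵥ x) ≤ matNorm V (a - atilde) * matNorm V⁻¹ x := by
    rw [hnormV, hnormVinv]; exact dot_cs _ _
  -- step 4: triangle
  have step4 : matNorm V (a - atilde) ≤ 2 * r := by
    have heq : matNorm V (ahat - atilde) = matNorm V (atilde - ahat) := by
      rw [hnormV, hnormV]
      have : S *ᵥ (ahat - atilde) = -(S *ᵥ (atilde - ahat)) := by
        rw [← Matrix.mulVec_neg]; congr 1; abel
      rw [this, neg_dotProduct, dotProduct_neg, neg_neg]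
    have hdecomp : a - atilde = (a - ahat) + (ahat - atilde) := by abel
    calc matNorm V (a - atilde)
        = Real.sqrt ((S *ᵥ ((a - ahat) + (ahat - atilde))) ⬝ᵥ (S *ᵥ ((a - ahat) + (ahat - atilde)))) := by
          rw [hnormV, hdecomp]
      _ = Real.sqrt ((S *ᵥ (a - ahat) + S *ᵥ (ahat - atilde)) ⬝ᵥ (S *ᵥ (a - ahat) + S *ᵥ (ahat - atilde))) := by
          rw [Matrix.mulVec_add]
      _ ≤ Real.sqrt ((S *ᵥ (a - ahat)) ⬝ᵥ (S *ᵥ (a - ahat))) + Real.sqrt ((S *ᵥ (ahat - atilde)) ⬝ᵥ (S *ᵥ (ahat - atilde))) :=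
          norm_triangle _ _
      _ = matNorm V (a - ahat) + matNorm V (ahat - atilde) := by rw [hnormV, hnormV]
      _ ≤ r + r := by rw [heq]; exact add_le_add h1 h2
      _ = 2 * r := by ring
  have hnn : 0 ≤ matNorm V⁻¹ x := Real.sqrt_nonneg _
  calc a ⬝ᵥ x - α ≤ (a - atilde) ⬝ᵥ x := step1
    _ = (S *ᵥ (a - atilde)) ⬝ᵥ (S⁻¹ *ᵥ x) := step2
    _ ≤ matNorm V (a - atilde) * matNorm V⁻¹ x := step3
    _ ≤ 2 * r * matNorm V⁻¹ x := mul_le_mul_of_nonneg_right step4 hnn
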